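/- Let (Ω, P) be a probability space and T1, T2 : Ω → R measurable random variables that are exchangeable, i.e., the joint law of (T1, T2) equals the joint law of (T2, T1). Set c = E[exp(T1 - max(T1,T2))] (which is strictly positive). Then E[max(exp(T1 - max(T1,T2))/c, exp(T2 - max(T1,T2))/c)] = 2 / (1 + E[exp(-|T1 - T2|)]). -/
import Mathlib


open MeasureTheory

theorem exchangeable_omega_formula
    {Ω : Type*} [MeasurableSpace Ω] (P : Measure Ω) [IsProbabilityMeasure P]
    (T1 T2 : Ω → ℝ) (hT1 : Measurable T1) (hT2 : Measurable T2)
    (hexch : P.map (fun ω => (T1 ω, T2 ω)) = P.map (fun ω => (T2 ω, T1 ω)))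
    (c : ℝ) (hc : c = ∫ ω, Real.exp (T1 ω - max (T1 ω) (T2 ω)) ∂P) :
    0 < c ∧
    ∫ ω, max (Real.exp (T1 ω - max (T1 ω) (T2 ω)) / c)
             (Real.exp (T2 ω - max (T1 ω) (T2 ω)) / c) ∂P
      = 2 / (1 + ∫ ω, Real.exp (-|T1 ω - T2 ω|) ∂P) := by
  set f : ℝ × ℝ → ℝ := fun p => Real.exp (p.1 - max p.1 p.2) with hf
  have hfc : Continuous f := by
    apply Real.continuous_exp.comp
    exact continuous_fst.sub (continuous_fst.max continuous_snd)
  have hm12 : Measurable (fun ω => (T1 ω, T2 ω)) := hT1.prodMk hT2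
  have hm21 : Measurable (fun ω => (T2 ω, T1 ω)) := hT2.prodMk hT1
  -- symmetric integral
  have hsym : (∫ ω, Real.exp (T2 ω - max (T1 ω) (T2 ω)) ∂P) = c := by
    have h1 : (∫ ω, Real.exp (T2 ω - max (T1 ω) (T2 ω)) ∂P)
        = ∫ p, f p ∂(P.map (fun ω => (T2 ω, T1 ω))) := by
      rw [integral_map hm21.aemeasurable hfc.aestronglyMeasurable]
      simp only [hf]
      congr 1
      ext ω
      rw [max_comm]
    rw [h1, ← hexch, integral_map hm12.aemeasurable hfc.aestronglyMeasurable, hc]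
  -- pointwise sum identity
  have hsum : ∀ ω, Real.exp (T1 ω - max (T1 ω) (T2 ω)) +
      Real.exp (T2 ω - max (T1 ω) (T2 ω)) = 1 + Real.exp (-|T1 ω - T2 ω|) := by
    intro ω
    rcases le_total (T1 ω) (T2 ω) with h | h
    · rw [max_eq_right h, abs_of_nonpos (by linarith)]
      simp [add_comm]
    · rw [max_eq_left h, abs_of_nonneg (by linarith)]
      simp
  -- integrability
  have hint1 : Integrable (fun ω => Real.exp (T1 ω - max (T1 ω) (T2 ω))) P := by
    refine (integrable_const (1:ℝ)).mono' ?_ (ae_of_all _ fun ω => ?_)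
    · exact ((hT1.sub (hT1.max hT2)).exp).aestronglyMeasurable
    · rw [Real.norm_eq_abs, abs_of_pos (Real.exp_pos _)]
      exact Real.exp_le_one_iff.mpr (by simp [le_max_left])
  have hint2 : Integrable (fun ω => Real.exp (T2 ω - max (T1 ω) (T2 ω))) P := by
    refine (integrable_const (1:ℝ)).mono' ?_ (ae_of_all _ fun ω => ?_)
    · exact ((hT2.sub (hT1.max hT2)).exp).aestronglyMeasurable
    · rw [Real.norm_eq_abs, abs_of_pos (Real.exp_pos _)]
      exact Real.exp_le_one_iff.mpr (by simp [le_max_right])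
  have hintI : Integrable (fun ω => Real.exp (-|T1 ω - T2 ω|)) P := by
    refine (integrable_const (1:ℝ)).mono' ?_ (ae_of_all _ fun ω => ?_)
    · exact (((hT1.sub hT2).abs.neg).exp).aestronglyMeasurable
    · rw [Real.norm_eq_abs, abs_of_pos (Real.exp_pos _)]
      exact Real.exp_le_one_iff.mpr (by simp [abs_nonneg])
  have h2c : 2 * c = 1 + ∫ ω, Real.exp (-|T1 ω - T2 ω|) ∂P := by
    have : 2 * c = ∫ ω, (Real.exp (T1 ω - max (T1 ω) (T2 ω)) +
        Real.exp (T2 ω - max (T1 ω) (T2 ω))) ∂P := by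
      rw [integral_add hint1 hint2, ← hc, hsym]; ring
    rw [this]
    have heq : (fun ω => Real.exp (T1 ω - max (T1 ω) (T2 ω)) +
        Real.exp (T2 ω - max (T1 ω) (T2 ω))) =
        fun ω => 1 + Real.exp (-|T1 ω - T2 ω|) := funext hsum
    rw [heq, integral_add (integrable_const 1) hintI]
    simp
  have hInn : 0 ≤ ∫ ω, Real.exp (-|T1 ω - T2 ω|) ∂P :=
    integral_nonneg fun ω => (Real.exp_pos _).le
  have hcpos : 0 < c := by nlinarith
  refine ⟨hcpos, ?_⟩
  have hmax0 : ∀ ω, max (Real.exp (T1 ω - max (T1 ω) (T2 ω)))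
      (Real.exp (T2 ω - max (T1 ω) (T2 ω))) = 1 := by
    intro ω
    rcases le_total (T1 ω) (T2 ω) with h | h
    · rw [max_eq_right (Real.exp_le_exp.mpr (by simp [h])), max_eq_right h]
      simp
    · rw [max_eq_left (Real.exp_le_exp.mpr (by simp [h])), max_eq_left h]
      simp
  have hmax1 : ∀ ω, max (Real.exp (T1 ω - max (T1 ω) (T2 ω)) / c)
      (Real.exp (T2 ω - max (T1 ω) (T2 ω)) / c) = 1 / c := by
    intro ω
    rw [max_div_div_right hcpos.le, hmax0]
  have : (∫ ω, max (Real.exp (T1 ω - max (T1 ω) (T2 ω)) / c)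
             (Real.exp (T2 ω - max (T1 ω) (T2 ω)) / c) ∂P) = 1 / c := by
    simp only [hmax1]
    simp
  rw [this]
  rw [← h2c]
  field_simp
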